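/- The multiplicative dynamic feedback product c @̌ d := c ∘̄ δ_{(d^{⧢−1} ∘ c)^{∘−1}} defines a right group action of the shuffle group (ℝ^m_{pi}⟨⟨X'⟩⟩, ⧢, 1) on ℝ^q⟨⟨X⟩⟩: c @̌ 1 = c and (c @̌ d₁) @̌ d₂ = c @̌ (d₁ ⧢ d₂) for all purely improper d₁, d₂. -/

import Mathlib

open scoped BigOperators

namespace FPS

/-- A (noncommutative) formal power series over alphabet `X` is a map from words to `ℝ`. -/
abbrev Series (X : Type*) := List X → ℝ

noncomputable section

variable {X : Type*} [DecidableEq X]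

/-- The series `1·∅`. -/
def one : Series X := fun η => if η = [] then 1 else 0

/-- Cauchy (concatenation) product. -/
def cauchy (c d : Series X) : Series X := fun η =>
  ∑ i ∈ Finset.range (η.length + 1), c (η.take i) * d (η.drop i)

/-- Shuffle product. -/
def sh (c d : Series X) : List X → ℝ
  | [] => c [] * d []
  | x :: t => sh (fun w => c (x :: w)) d t + sh c (fun w => d (x :: w)) t

/-- Cauchy powers. -/
def cpow (c : Series X) : ℕ → Series X
  | 0 => one
  | k + 1 => cauchy c (cpow c k)

/-- Shuffle powers. -/
def shpow (c : Series X) : ℕ → Series X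
  | 0 => one
  | k + 1 => sh c (shpow c k)

/-- The proper series `1 - s/(s,∅)` entering the inverse formulas (negated proper part of `s/(s,∅)`). -/
def sprime (s : Series X) : Series X := fun w => if w = [] then 0 else - (s w / s [])

/-- Cauchy inverse `(s,∅)⁻¹ Σ_k (s')^k` of a purely improper series. -/
def cInv (s : Series X) : Series X := fun η =>
  (s [])⁻¹ * ∑ k ∈ Finset.range (η.length + 1), cpow (sprime s) k η

/-- Shuffle inverse `(s,∅)⁻¹ Σ_k (s')^{⧢k}` of a purely improper series. -/
def shInv (s : Series X) : Series X := fun η =>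
  (s [])⁻¹ * ∑ k ∈ Finset.range (η.length + 1), shpow (sprime s) k η

/-- The order: minimal length of a word in the support (`⊤` for the zero series). -/
def ord (c : Series X) : ℕ∞ := sInf ((fun η : List X => (η.length : ℕ∞)) '' {η | c η ≠ 0})

/-- `σ^n` with `σ^⊤ = 0`. -/
def powE (σ : ℝ) : ℕ∞ → ℝ := fun n => if n = ⊤ then 0 else σ ^ n.toNat

/-- The ultrametric `κ(c,d) = σ^{ord(c-d)}`. -/
def kappa (σ : ℝ) (c d : Series X) : ℝ := powE σ (ord (c - d))

/-- Order of a vector of series (minimum over components). -/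
def ordV {n : ℕ} (c : Fin n → Series X) : ℕ∞ := ⨅ i, ord (c i)

/-- Ultrametric on vectors of series. -/
def kappaV (σ : ℝ) {n : ℕ} (c d : Fin n → Series X) : ℝ := powE σ (ordV (c - d))

/-- Proper part `c - (c,∅)∅`. -/
def properPart (c : Series X) : Series X := fun w => if w = [] then 0 else c w

/-- Left concatenation by a letter: `x·s`. -/
def leftc (x : X) (s : Series X) : Series X := fun η =>
  match η with
  | [] => 0
  | y :: t => if y = x then s t else 0

end

noncomputable section

/-- `φ̄_d(η)` : the algebra homomorphism defining the multiplicative mixed composition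
product, with `φ̄_d(x_0)(w) = x_0 w` and `φ̄_d(x_i)(w) = x_i (d_i ⧢ w)`. -/
def phiWord {m : ℕ} (d : Fin m → Series (Fin (m + 1))) :
    List (Fin (m + 1)) → Series (Fin (m + 1)) → Series (Fin (m + 1))
  | [], w => w
  | i :: t, w =>
      Fin.cases (leftc 0 (phiWord d t w)) (fun j => leftc j.succ (sh (d j) (phiWord d t w))) i

/-- Multiplicative mixed composition product `c ∘̄ δ_d = Σ_η (c,η) φ̄_d(η)(1)`. -/
def mix {m : ℕ} (c : Series (Fin (m + 1))) (d : Fin m → Series (Fin (m + 1))) :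
    Series (Fin (m + 1)) := fun η =>
  ∑ k ∈ Finset.range (η.length + 1),
    ∑ v : List.Vector (Fin (m + 1)) k, c v.toList * phiWord d v.toList one η

/-- `ψ_e(η)` : the algebra homomorphism defining the composition product, with
`ψ_e(x'_i)(w) = x_0 (e_i ⧢ w)`, `e_0 = 1∅`. -/
def psiWord {ℓ m : ℕ} (e : Fin ℓ → Series (Fin (m + 1))) :
    List (Fin (ℓ + 1)) → Series (Fin (m + 1)) → Series (Fin (m + 1))
  | [], w => w
  | i :: t, w => leftc 0 (sh (Fin.cases one e i) (psiWord e t w))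

/-- Composition product `c ∘ e = Σ_η (c,η) ψ_e(η)(1)`. -/
def comp {ℓ m : ℕ} (c : Series (Fin (ℓ + 1))) (e : Fin ℓ → Series (Fin (m + 1))) :
    Series (Fin (m + 1)) := fun η =>
  ∑ k ∈ Finset.range (η.length + 1),
    ∑ v : List.Vector (Fin (ℓ + 1)) k, c v.toList * psiWord e v.toList one η

/-- The multiplicative composition product on `δ`-series:
`δ_c ∘ δ_d = δ_{d ⧢ (c ∘̄ δ_d)}`, expressed on the underlying series. -/
def star {m : ℕ} (c d : Fin m → Series (Fin (m + 1))) : Fin m → Series (Fin (m + 1)) :=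
  fun i => sh (d i) (mix (c i) d)

/-- The all-ones series vector (generating series of the identity `δ_1`). -/
def oneV {X : Type*} [DecidableEq X] (m : ℕ) : Fin m → Series X := fun _ => one

open Classical in
/-- The inverse `d^{∘-1}` in the multiplicative dynamic output feedback group: the unique
solution of `e = d^{⧢-1} ∘̄ δ_e`. -/
def dynInv {m : ℕ} (d : Fin m → Series (Fin (m + 1))) : Fin m → Series (Fin (m + 1)) :=
  if h : ∃ e : Fin m → Series (Fin (m + 1)), e = fun i => mix (shInv (d i)) e then h.choose
  else oneV m

/-- Shuffle power of a family: `c^{⧢n} = c_1^{⧢n_1} ⧢ ⋯ ⧢ c_ℓ^{⧢n_ℓ}`. -/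
def shFam {X : Type*} [DecidableEq X] {ℓ : ℕ} (c : Fin ℓ → Series X) (n : Fin ℓ →₀ ℕ) :
    Series X :=
  (List.finRange ℓ).foldr (fun i acc => sh (shpow (c i) (n i)) acc) one

/-- Wiener-Fliess composition product `d ∘̂ c = Σ_{η∈X̃*} (d,η) c^{⧢η}` of a commutative
series `d` with a (proper) noncommutative series vector `c`. -/
def wf {X : Type*} [DecidableEq X] {ℓ : ℕ} (d : MvPowerSeries (Fin ℓ) ℝ)
    (c : Fin ℓ → Series X) : Series X := fun η =>
  ∑ n ∈ Finset.Iic (Finsupp.equivFunOnFinite.symm fun _ : Fin ℓ => η.length),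
    MvPowerSeries.coeff n d * shFam c n η

end


/-- The multiplicative dynamic feedback product `c @̌ d = c ∘̄ δ_{(d^{⧢-1} ∘ c)^{∘-1}}`. -/
noncomputable def feedback {m q : ℕ} (c : Fin q → Series (Fin (m + 1)))
    (d : Fin m → Series (Fin (q + 1))) : Fin q → Series (Fin (m + 1)) :=
  fun i => mix (c i) (dynInv fun j => comp (shInv (d j)) c)


noncomputable section AuxProof

variable {X : Type*} [DecidableEq X]

set_option linter.unusedSectionVars false

/-- Left derivative. -/
def ld (x : X) (c : Series X) : Series X := fun w => c (x :: w)

lemma sh_cons (c d : Series X) (x : X) (t : List X) :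
    sh c d (x :: t) = sh (ld x c) d t + sh c (ld x d) t := rfl

lemma sh_nil (c d : Series X) : sh c d [] = c [] * d [] := rfl

lemma congrFun₂ {c d : Series X} (h : c = d) (w : List X) : c w = d w := by rw [h]

lemma sh_zero_right (c : Series X) : sh c (0 : Series X) = 0 := by
  funext η
  induction η generalizing c with
  | nil => simp [sh_nil]
  | cons x t ih =>
    have h0 : ld x (0 : Series X) = 0 := rfl
    rw [sh_cons, h0, ih, ih]; simp

lemma sh_zero_left (c : Series X) : sh (0 : Series X) c = 0 := by
  funext η
  induction η generalizing c with
  | nil => simp [sh_nil]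
  | cons x t ih =>
    have h0 : ld x (0 : Series X) = 0 := rfl
    rw [sh_cons, h0, ih, ih]; simp

lemma ld_add (x : X) (c d : Series X) : ld x (c + d) = ld x c + ld x d := rfl

lemma sh_add_right (c d e : Series X) : sh c (d + e) = sh c d + sh c e := by
  funext η
  induction η generalizing c d e with
  | nil => simp [sh_nil]; ring
  | cons x t ih =>
    rw [Pi.add_apply, sh_cons, sh_cons, sh_cons, ld_add, ih, ih]
    simp only [Pi.add_apply]; ring

lemma sh_add_left (c d e : Series X) : sh (c + d) e = sh c e + sh d e := by
  funext η
  induction η generalizing c d e with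
  | nil => simp [sh_nil]; ring
  | cons x t ih =>
    rw [Pi.add_apply, sh_cons, sh_cons, sh_cons, ld_add, ih, ih]
    simp only [Pi.add_apply]; ring

lemma sh_smul_right (r : ℝ) (c d : Series X) : sh c (r • d) = r • sh c d := by
  funext η
  induction η generalizing c d with
  | nil => simp [sh_nil]; ring
  | cons x t ih =>
    have : ld x (r • d) = r • ld x d := rfl
    rw [Pi.smul_apply, sh_cons, sh_cons, this, ih, ih]
    simp only [Pi.smul_apply, smul_eq_mul]; ring

lemma sh_smul_left (r : ℝ) (c d : Series X) : sh (r • c) d = r • sh c d := by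
  funext η
  induction η generalizing c d with
  | nil => simp [sh_nil]; ring
  | cons x t ih =>
    have : ld x (r • c) = r • ld x c := rfl
    rw [Pi.smul_apply, sh_cons, sh_cons, this, ih, ih]
    simp only [Pi.smul_apply, smul_eq_mul]; ring

lemma sh_sum_right {ι : Type*} (s : Finset ι) (c : Series X) (f : ι → Series X) :
    sh c (∑ i ∈ s, f i) = ∑ i ∈ s, sh c (f i) := by
  classical
  induction s using Finset.induction with
  | empty => simpa using sh_zero_right c
  | insert _ _ h ih => rw [Finset.sum_insert h, Finset.sum_insert h, sh_add_right, ih]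

lemma sh_sum_left {ι : Type*} (s : Finset ι) (c : Series X) (f : ι → Series X) :
    sh (∑ i ∈ s, f i) c = ∑ i ∈ s, sh (f i) c := by
  classical
  induction s using Finset.induction with
  | empty => simpa using sh_zero_left c
  | insert _ _ h ih => rw [Finset.sum_insert h, Finset.sum_insert h, sh_add_left, ih]

lemma one_nil : (one : Series X) [] = 1 := rfl

lemma ld_one (x : X) : ld x (one : Series X) = 0 := by
  funext w; simp [ld, one]

lemma sh_one_left (c : Series X) : sh (one : Series X) c = c := by
  funext η
  induction η generalizing c with
  | nil => simp [sh_nil, one]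
  | cons x t ih => rw [sh_cons, ld_one, sh_zero_left, ih]; simp; rfl

lemma sh_one_right (c : Series X) : sh c (one : Series X) = c := by
  funext η
  induction η generalizing c with
  | nil => simp [sh_nil, one]
  | cons x t ih => rw [sh_cons, ld_one, sh_zero_right, ih]; simp; rfl

lemma sh_comm (c d : Series X) : sh c d = sh d c := by
  funext η
  induction η generalizing c d with
  | nil => simp [sh_nil]; ring
  | cons x t ih => rw [sh_cons, sh_cons, ih, ih (d := ld x d)]; ring

lemma sh_assoc (c d e : Series X) : sh (sh c d) e = sh c (sh d e) := by
  funext η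
  induction η generalizing c d e with
  | nil => simp [sh_nil]; ring
  | cons x t ih =>
    have h1 : ld x (sh c d) = sh (ld x c) d + sh c (ld x d) := by
      funext w; rw [ld]; exact sh_cons c d x w
    have h2 : ld x (sh d e) = sh (ld x d) e + sh d (ld x e) := by
      funext w; rw [ld]; exact sh_cons d e x w
    rw [sh_cons, sh_cons, h1, h2, sh_add_left, sh_add_right]
    simp only [Pi.add_apply]
    rw [ih (ld x c) d e, ih c (ld x d) e, ih c d (ld x e)]
    ring

/-- `sh c d η` only depends on values of `c`, `d` at words of length ≤ `η.length`. -/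
lemma sh_congr {c c' d d' : Series X} {n : ℕ}
    (hc : ∀ w : List X, w.length ≤ n → c w = c' w)
    (hd : ∀ w : List X, w.length ≤ n → d w = d' w) :
    ∀ η : List X, η.length ≤ n → sh c d η = sh c' d' η := by
  induction n generalizing c c' d d' with
  | zero =>
    intro η hη
    have : η = [] := List.length_eq_zero_iff.mp (Nat.le_zero.mp hη)
    subst this
    rw [sh_nil, sh_nil, hc [] (by simp), hd [] (by simp)]
  | succ n ih =>
    intro η hη
    match η with
    | [] => rw [sh_nil, sh_nil, hc [] (by simp), hd [] (by simp)]
    | x :: t =>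
      have ht : t.length ≤ n := by simpa using hη
      rw [sh_cons, sh_cons]
      have hcx : ∀ w : List X, w.length ≤ n → ld x c w = ld x c' w := fun w hw =>
        hc (x :: w) (by simpa using hw)
      have hdx : ∀ w : List X, w.length ≤ n → ld x d w = ld x d' w := fun w hw =>
        hd (x :: w) (by simpa using hw)
      have hc' : ∀ w : List X, w.length ≤ n → c w = c' w := fun w hw =>
        hc w (le_trans hw (Nat.le_succ n))
      have hd' : ∀ w : List X, w.length ≤ n → d w = d' w := fun w hw =>
        hd w (le_trans hw (Nat.le_succ n))
      rw [ih hcx hd' t ht, ih hc' hdx t ht]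

end AuxProof

section VecSum

variable {α : Type*} [Fintype α] [DecidableEq α]

lemma sum_vec_zero (f : List.Vector α 0 → ℝ) :
    ∑ v : List.Vector α 0, f v = f List.Vector.nil := by
  have : Unique (List.Vector α 0) := ⟨⟨List.Vector.nil⟩, fun v => by
    apply List.Vector.toList_injective; simp [List.Vector.eq_nil v]⟩
  exact (Fintype.sum_unique f).trans (congrArg f (List.Vector.eq_nil _))

lemma sum_vec_succ (k : ℕ) (f : List.Vector α (k + 1) → ℝ) :
    ∑ v : List.Vector α (k + 1), f v = ∑ i : α, ∑ v : List.Vector α k, f (i ::ᵥ v) := by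
  rw [← Fintype.sum_prod_type' (f := fun (i : α) (v : List.Vector α k) => f (i ::ᵥ v))]
  exact (Fintype.sum_equiv
    { toFun := fun p : α × List.Vector α k => p.1 ::ᵥ p.2
      invFun := fun v => (v.head, v.tail)
      left_inv := fun p => by simp
      right_inv := fun v => v.cons_head_tail } _ _ (fun p => rfl)).symm

end VecSum

noncomputable section MixComp

set_option linter.unusedSectionVars false

variable {m ℓ : ℕ}

lemma leftc_nil (x : Fin (m + 1)) (s : Series (Fin (m + 1))) : leftc x s [] = 0 := rfl

lemma leftc_cons (x y : Fin (m + 1)) (s : Series (Fin (m + 1))) (t : List (Fin (m + 1))) :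
    leftc x s (y :: t) = if y = x then s t else 0 := rfl

lemma phiWord_nil (d : Fin m → Series (Fin (m + 1))) (w : Series (Fin (m + 1))) :
    phiWord d [] w = w := rfl

lemma phiWord_cons_zero (d : Fin m → Series (Fin (m + 1))) (l : List (Fin (m + 1)))
    (w : Series (Fin (m + 1))) :
    phiWord d ((0 : Fin (m + 1)) :: l) w = leftc 0 (phiWord d l w) := by
  simp [phiWord]

lemma phiWord_cons_succ (d : Fin m → Series (Fin (m + 1))) (j : Fin m)
    (l : List (Fin (m + 1))) (w : Series (Fin (m + 1))) :
    phiWord d (j.succ :: l) w = leftc j.succ (sh (d j) (phiWord d l w)) := by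
  simp [phiWord]

lemma sh_eval_zero_right {c s : Series (Fin (m + 1))} {η : List (Fin (m + 1))}
    (h : ∀ w : List (Fin (m + 1)), w.length ≤ η.length → s w = 0) : sh c s η = 0 := by
  have := sh_congr (c := c) (c' := c) (d := s) (d' := 0) (n := η.length)
    (fun w _ => rfl) h η le_rfl
  rw [this, sh_zero_right]; rfl

lemma phiWord_small (d : Fin m → Series (Fin (m + 1))) :
    ∀ (v η : List (Fin (m + 1))), η.length < v.length → phiWord d v one η = 0 := by
  intro v
  induction v with
  | nil => intro η h; simp at h
  | cons i l ih =>
    intro η h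
    induction i using Fin.cases with
    | zero =>
      rw [phiWord_cons_zero]
      match η with
      | [] => rfl
      | y :: t =>
        rw [leftc_cons]
        by_cases hy : y = 0
        · rw [if_pos hy]; exact ih t (by simpa using h)
        · rw [if_neg hy]
    | succ j =>
      rw [phiWord_cons_succ]
      match η with
      | [] => rfl
      | y :: t =>
        rw [leftc_cons]
        by_cases hy : y = j.succ
        · rw [if_pos hy]
          refine sh_eval_zero_right (fun w hw => ih w ?_)
          have : t.length < l.length := by simpa using h
          omega
        · rw [if_neg hy]

/-- One homogeneous layer of `mix`. -/
def mixP (c : Series (Fin (m + 1))) (d : Fin m → Series (Fin (m + 1))) (k : ℕ) :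
    Series (Fin (m + 1)) := fun η =>
  ∑ v : List.Vector (Fin (m + 1)) k, c v.toList * phiWord d v.toList one η

lemma mix_eq_sum (c : Series (Fin (m + 1))) (d : Fin m → Series (Fin (m + 1)))
    (η : List (Fin (m + 1))) :
    mix c d η = ∑ k ∈ Finset.range (η.length + 1), mixP c d k η := rfl

lemma mixP_small {c : Series (Fin (m + 1))} {d : Fin m → Series (Fin (m + 1))} {k : ℕ}
    {η : List (Fin (m + 1))} (h : η.length < k) : mixP c d k η = 0 := by
  refine Finset.sum_eq_zero fun v _ => ?_
  rw [phiWord_small d v.toList η (by simpa [List.Vector.toList_length] using h), mul_zero]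

lemma mix_eval_of_lt (c : Series (Fin (m + 1))) (d : Fin m → Series (Fin (m + 1)))
    {η : List (Fin (m + 1))} {N : ℕ} (h : η.length < N) :
    mix c d η = ∑ k ∈ Finset.range N, mixP c d k η := by
  rw [mix_eq_sum]
  refine Finset.sum_subset (Finset.range_subset_range.mpr (by omega)) fun k _ hk => ?_
  exact mixP_small (by simp at hk ⊢; omega)

lemma mix_nil (c : Series (Fin (m + 1))) (d : Fin m → Series (Fin (m + 1))) :
    mix c d [] = c [] := by
  rw [mix_eq_sum]
  simp only [List.length_nil, zero_add, Finset.range_one, Finset.sum_singleton]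
  rw [mixP, sum_vec_zero]
  simp [phiWord_nil, one_nil]

lemma mix_zero_cons (c : Series (Fin (m + 1))) (d : Fin m → Series (Fin (m + 1)))
    (t : List (Fin (m + 1))) :
    mix c d ((0 : Fin (m + 1)) :: t) = mix (ld 0 c) d t := by
  have hlen : ((0 : Fin (m + 1)) :: t).length + 1 = t.length + 1 + 1 := by simp
  rw [mix_eq_sum, hlen, Finset.sum_range_succ']
  have h0 : mixP c d 0 ((0 : Fin (m + 1)) :: t) = 0 := by
    rw [mixP, sum_vec_zero]
    simp [phiWord_nil, one]
  rw [h0, add_zero, mix_eq_sum]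
  refine Finset.sum_congr rfl fun k _ => ?_
  rw [mixP, sum_vec_succ, Fin.sum_univ_succ]
  have hsucc : ∀ j : Fin m, ∑ v : List.Vector (Fin (m + 1)) k,
      c ((Fin.succ j ::ᵥ v).toList) * phiWord d ((Fin.succ j ::ᵥ v).toList) one
        ((0 : Fin (m + 1)) :: t) = 0 := by
    intro j
    refine Finset.sum_eq_zero fun v _ => ?_
    rw [List.Vector.toList_cons, phiWord_cons_succ, leftc_cons,
      if_neg (by exact fun h => absurd h.symm (Fin.succ_ne_zero j)), mul_zero]
  rw [Finset.sum_eq_zero (fun j _ => hsucc j), add_zero]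
  refine Finset.sum_congr rfl fun v _ => ?_
  rw [List.Vector.toList_cons, phiWord_cons_zero, leftc_cons, if_pos rfl]
  rfl

lemma mix_succ_cons (c : Series (Fin (m + 1))) (d : Fin m → Series (Fin (m + 1)))
    (j : Fin m) (t : List (Fin (m + 1))) :
    mix c d (j.succ :: t) = sh (d j) (mix (ld j.succ c) d) t := by
  classical
  set S : Series (Fin (m + 1)) :=
    ∑ k ∈ Finset.range (t.length + 1), mixP (ld j.succ c) d k with hS
  have hLHS : mix c d (j.succ :: t) = sh (d j) S t := by
    have hlen : (j.succ :: t).length + 1 = t.length + 1 + 1 := by simp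
    rw [mix_eq_sum, hlen, Finset.sum_range_succ']
    have h0 : mixP c d 0 (j.succ :: t) = 0 := by
      rw [mixP, sum_vec_zero]
      simp [phiWord_nil, one]
    rw [h0, add_zero]
    have hterm : ∀ k, mixP c d (k + 1) (j.succ :: t)
        = sh (d j) (mixP (ld j.succ c) d k) t := by
      intro k
      rw [mixP, sum_vec_succ, Fin.sum_univ_succ]
      have h00 : ∑ v : List.Vector (Fin (m + 1)) k,
          c (((0 : Fin (m + 1)) ::ᵥ v).toList) * phiWord d (((0 : Fin (m + 1)) ::ᵥ v).toList)
            one (j.succ :: t) = 0 := by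
        refine Finset.sum_eq_zero fun v _ => ?_
        rw [List.Vector.toList_cons, phiWord_cons_zero, leftc_cons,
          if_neg (Fin.succ_ne_zero j), mul_zero]
      rw [h00, zero_add]
      have hone : ∀ j' : Fin m, j' ≠ j → ∑ v : List.Vector (Fin (m + 1)) k,
          c ((Fin.succ j' ::ᵥ v).toList) * phiWord d ((Fin.succ j' ::ᵥ v).toList) one
            (j.succ :: t) = 0 := by
        intro j' hj'
        refine Finset.sum_eq_zero fun v _ => ?_
        rw [List.Vector.toList_cons, phiWord_cons_succ, leftc_cons,
          if_neg (by simp [Fin.succ_inj]; exact fun h => hj' h.symm), mul_zero]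
      rw [Finset.sum_eq_single_of_mem j (Finset.mem_univ j) (fun j' _ h => hone j' h)]
      have : ∀ v : List.Vector (Fin (m + 1)) k,
          c ((Fin.succ j ::ᵥ v).toList) * phiWord d ((Fin.succ j ::ᵥ v).toList) one
            (j.succ :: t)
          = (c (j.succ :: v.toList) • sh (d j) (phiWord d v.toList one)) t := by
        intro v
        rw [List.Vector.toList_cons, phiWord_cons_succ, leftc_cons, if_pos rfl]
        rfl
      rw [Finset.sum_congr rfl fun v _ => this v, ← Finset.sum_apply]
      have hsw : (∑ v : List.Vector (Fin (m + 1)) k,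
          c (j.succ :: v.toList) • sh (d j) (phiWord d v.toList one))
          = sh (d j) (mixP (ld j.succ c) d k) := by
        rw [Finset.sum_congr rfl fun (v : List.Vector (Fin (m + 1)) k) _ =>
          (sh_smul_right (c (j.succ :: v.toList)) (d j) (phiWord d v.toList one)).symm,
          ← sh_sum_right]
        have hinner : (∑ v : List.Vector (Fin (m + 1)) k,
            c (j.succ :: v.toList) • phiWord d v.toList one)
            = mixP (ld j.succ c) d k := by
          funext w
          show (∑ v : List.Vector (Fin (m + 1)) k,
            c (j.succ :: v.toList) • phiWord d v.toList one) w
            = ∑ v : List.Vector (Fin (m + 1)) k,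
              ld j.succ c v.toList * phiWord d v.toList one w
          rw [Finset.sum_apply]
          exact Finset.sum_congr rfl fun v _ => rfl
        rw [hinner]
      rw [hsw]
    rw [Finset.sum_congr rfl fun k _ => hterm k, hS, ← Finset.sum_apply, ← sh_sum_right]
  rw [hLHS]
  refine (sh_congr (n := t.length) (fun w _ => rfl) (fun w hw => ?_) t le_rfl).symm
  rw [hS, Finset.sum_apply, ← mix_eval_of_lt _ _ (by omega)]

lemma mix_add_left (a b : Series (Fin (m + 1))) (d : Fin m → Series (Fin (m + 1))) :
    mix (a + b) d = mix a d + mix b d := by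
  funext η
  rw [Pi.add_apply, mix_eq_sum, mix_eq_sum, mix_eq_sum, ← Finset.sum_add_distrib]
  refine Finset.sum_congr rfl fun k _ => ?_
  rw [mixP, mixP, mixP, ← Finset.sum_add_distrib]
  refine Finset.sum_congr rfl fun v _ => ?_
  rw [Pi.add_apply]; ring

lemma mix_smul_left (r : ℝ) (a : Series (Fin (m + 1))) (d : Fin m → Series (Fin (m + 1))) :
    mix (r • a) d = r • mix a d := by
  funext η
  rw [Pi.smul_apply, smul_eq_mul, mix_eq_sum, mix_eq_sum, Finset.mul_sum]
  refine Finset.sum_congr rfl fun k _ => ?_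
  rw [mixP, mixP, Finset.mul_sum]
  refine Finset.sum_congr rfl fun v _ => ?_
  rw [Pi.smul_apply, smul_eq_mul]; ring

lemma mix_zero_left (d : Fin m → Series (Fin (m + 1))) : mix (0 : Series (Fin (m + 1))) d = 0 := by
  funext η
  rw [mix_eq_sum]
  refine Finset.sum_eq_zero fun k _ => Finset.sum_eq_zero fun v _ => ?_
  rw [Pi.zero_apply, zero_mul]

lemma mix_sum_left {ι : Type*} (s : Finset ι) (f : ι → Series (Fin (m + 1)))
    (d : Fin m → Series (Fin (m + 1))) :
    mix (∑ i ∈ s, f i) d = ∑ i ∈ s, mix (f i) d := by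
  classical
  induction s using Finset.induction with
  | empty => simpa using mix_zero_left d
  | insert _ _ h ih => rw [Finset.sum_insert h, Finset.sum_insert h, mix_add_left, ih]

lemma mix_one (d : Fin m → Series (Fin (m + 1))) : mix (one : Series (Fin (m + 1))) d = one := by
  funext η
  rw [mix_eq_sum, Finset.sum_eq_single_of_mem 0 (by simp)]
  · rw [mixP, sum_vec_zero]
    simp [phiWord_nil, one_nil]
  · intro k _ hk
    match k, hk with
    | k + 1, _ =>
      refine Finset.sum_eq_zero fun v _ => ?_
      have : v.toList ≠ [] := by
        intro h
        have := v.toList_length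
        rw [h] at this; simp at this
      rw [show (one : Series (Fin (m + 1))) v.toList = 0 by simp [one, this], zero_mul]

/-- `mix c d η` depends on `d` only at words of length < `η.length`. -/
lemma mix_congr {d d' : Fin m → Series (Fin (m + 1))} {n : ℕ}
    (h : ∀ (j : Fin m) (w : List (Fin (m + 1))), w.length < n → d j w = d' j w) :
    ∀ (c : Series (Fin (m + 1))) (η : List (Fin (m + 1))), η.length ≤ n →
      mix c d η = mix c d' η := by
  induction n with
  | zero =>
    intro c η hη
    have : η = [] := List.length_eq_zero_iff.mp (Nat.le_zero.mp hη)
    subst this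
    rw [mix_nil, mix_nil]
  | succ n ih =>
    intro c η hη
    match η with
    | [] => rw [mix_nil, mix_nil]
    | x :: t =>
      have ht : t.length ≤ n := by simpa using hη
      rcases Fin.eq_zero_or_eq_succ x with rfl | ⟨j, rfl⟩
      · rw [mix_zero_cons, mix_zero_cons]
        exact ih (fun j w hw => h j w (by omega)) _ t ht
      · rw [mix_succ_cons, mix_succ_cons]
        refine sh_congr (n := t.length) (fun w hw => h j w (by omega)) (fun w hw => ?_) t le_rfl
        exact ih (fun j' u hu => h j' u (by omega)) _ w (by omega)

end MixComp

noncomputable section CompRules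

set_option linter.unusedSectionVars false

variable {m ℓ : ℕ}

lemma psiWord_nil (e : Fin ℓ → Series (Fin (m + 1))) (w : Series (Fin (m + 1))) :
    psiWord e [] w = w := rfl

lemma psiWord_cons (e : Fin ℓ → Series (Fin (m + 1))) (i : Fin (ℓ + 1))
    (l : List (Fin (ℓ + 1))) (w : Series (Fin (m + 1))) :
    psiWord e (i :: l) w = leftc 0 (sh (Fin.cases one e i) (psiWord e l w)) := rfl

lemma psiWord_small (e : Fin ℓ → Series (Fin (m + 1))) :
    ∀ (v : List (Fin (ℓ + 1))) (η : List (Fin (m + 1))), η.length < v.length →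
      psiWord e v one η = 0 := by
  intro v
  induction v with
  | nil => intro η h; simp at h
  | cons i l ih =>
    intro η h
    rw [psiWord_cons]
    match η with
    | [] => rfl
    | y :: t =>
      rw [leftc_cons]
      by_cases hy : y = 0
      · rw [if_pos hy]
        refine sh_eval_zero_right (fun w hw => ih w ?_)
        have : t.length < l.length := by simpa using h
        omega
      · rw [if_neg hy]

/-- One homogeneous layer of `comp`. -/
def compP (c : Series (Fin (ℓ + 1))) (e : Fin ℓ → Series (Fin (m + 1))) (k : ℕ) :
    Series (Fin (m + 1)) := fun η =>
  ∑ v : List.Vector (Fin (ℓ + 1)) k, c v.toList * psiWord e v.toList one η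

lemma comp_eq_sum (c : Series (Fin (ℓ + 1))) (e : Fin ℓ → Series (Fin (m + 1)))
    (η : List (Fin (m + 1))) :
    comp c e η = ∑ k ∈ Finset.range (η.length + 1), compP c e k η := rfl

lemma compP_small {c : Series (Fin (ℓ + 1))} {e : Fin ℓ → Series (Fin (m + 1))} {k : ℕ}
    {η : List (Fin (m + 1))} (h : η.length < k) : compP c e k η = 0 := by
  refine Finset.sum_eq_zero fun v _ => ?_
  rw [psiWord_small e v.toList η (by simpa [List.Vector.toList_length] using h), mul_zero]

lemma comp_eval_of_lt (c : Series (Fin (ℓ + 1))) (e : Fin ℓ → Series (Fin (m + 1)))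
    {η : List (Fin (m + 1))} {N : ℕ} (h : η.length < N) :
    comp c e η = ∑ k ∈ Finset.range N, compP c e k η := by
  rw [comp_eq_sum]
  refine Finset.sum_subset (Finset.range_subset_range.mpr (by omega)) fun k _ hk => ?_
  exact compP_small (by simp at hk ⊢; omega)

lemma comp_nil (c : Series (Fin (ℓ + 1))) (e : Fin ℓ → Series (Fin (m + 1))) :
    comp c e [] = c [] := by
  rw [comp_eq_sum]
  simp only [List.length_nil, zero_add, Finset.range_one, Finset.sum_singleton]
  rw [compP, sum_vec_zero]
  simp [psiWord_nil, one_nil]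

lemma comp_succ_cons (c : Series (Fin (ℓ + 1))) (e : Fin ℓ → Series (Fin (m + 1)))
    (j : Fin m) (t : List (Fin (m + 1))) :
    comp c e (j.succ :: t) = 0 := by
  rw [comp_eq_sum]
  refine Finset.sum_eq_zero fun k _ => ?_
  rw [compP]
  refine Finset.sum_eq_zero fun v _ => ?_
  match k, v with
  | 0, v =>
    rw [List.Vector.eq_nil v]
    show c [] * one (j.succ :: t) = 0
    simp [one]
  | k + 1, v =>
    rw [← v.cons_head_tail, List.Vector.toList_cons, psiWord_cons, leftc_cons,
      if_neg (Fin.succ_ne_zero j), mul_zero]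

lemma comp_zero_cons (c : Series (Fin (ℓ + 1))) (e : Fin ℓ → Series (Fin (m + 1)))
    (t : List (Fin (m + 1))) :
    comp c e ((0 : Fin (m + 1)) :: t)
      = ∑ i : Fin (ℓ + 1), sh (Fin.cases one e i) (comp (ld i c) e) t := by
  classical
  have hlen : ((0 : Fin (m + 1)) :: t).length + 1 = t.length + 1 + 1 := by simp
  rw [comp_eq_sum, hlen, Finset.sum_range_succ']
  have h0 : compP c e 0 ((0 : Fin (m + 1)) :: t) = 0 := by
    rw [compP, sum_vec_zero]
    simp [psiWord_nil, one]
  rw [h0, add_zero]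
  have hterm : ∀ k, compP c e (k + 1) ((0 : Fin (m + 1)) :: t)
      = ∑ i : Fin (ℓ + 1), sh (Fin.cases one e i) (compP (ld i c) e k) t := by
    intro k
    rw [compP, sum_vec_succ]
    refine Finset.sum_congr rfl fun i _ => ?_
    have : ∀ v : List.Vector (Fin (ℓ + 1)) k,
        c ((i ::ᵥ v).toList) * psiWord e ((i ::ᵥ v).toList) one ((0 : Fin (m + 1)) :: t)
        = (c (i :: v.toList) • sh (Fin.cases one e i) (psiWord e v.toList one)) t := by
      intro v
      rw [List.Vector.toList_cons, psiWord_cons, leftc_cons, if_pos rfl]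
      rfl
    rw [Finset.sum_congr rfl fun v _ => this v, ← Finset.sum_apply,
      Finset.sum_congr rfl fun (v : List.Vector (Fin (ℓ + 1)) k) _ =>
        (sh_smul_right (c (i :: v.toList)) (Fin.cases one e i) (psiWord e v.toList one)).symm,
      ← sh_sum_right]
    have hinner : (∑ v : List.Vector (Fin (ℓ + 1)) k,
        c (i :: v.toList) • psiWord e v.toList one) = compP (ld i c) e k := by
      funext w
      show (∑ v : List.Vector (Fin (ℓ + 1)) k,
        c (i :: v.toList) • psiWord e v.toList one) w
        = ∑ v : List.Vector (Fin (ℓ + 1)) k,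
          ld i c v.toList * psiWord e v.toList one w
      rw [Finset.sum_apply]
      exact Finset.sum_congr rfl fun v _ => rfl
    rw [hinner]
  rw [Finset.sum_congr rfl fun k _ => hterm k, Finset.sum_comm]
  refine Finset.sum_congr rfl fun i _ => ?_
  have hS : (∑ k ∈ Finset.range (t.length + 1), sh (Fin.cases one e i) (compP (ld i c) e k) t)
      = sh (Fin.cases one e i) (∑ k ∈ Finset.range (t.length + 1), compP (ld i c) e k) t := by
    rw [sh_sum_right, Finset.sum_apply]
  rw [hS]
  refine (sh_congr (n := t.length) (fun w _ => rfl) (fun w hw => ?_) t le_rfl)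
  rw [Finset.sum_apply, ← comp_eval_of_lt _ _ (by omega)]

lemma comp_add_left (a b : Series (Fin (ℓ + 1))) (e : Fin ℓ → Series (Fin (m + 1))) :
    comp (a + b) e = comp a e + comp b e := by
  funext η
  rw [Pi.add_apply, comp_eq_sum, comp_eq_sum, comp_eq_sum, ← Finset.sum_add_distrib]
  refine Finset.sum_congr rfl fun k _ => ?_
  rw [compP, compP, compP, ← Finset.sum_add_distrib]
  refine Finset.sum_congr rfl fun v _ => ?_
  rw [Pi.add_apply]; ring

lemma comp_one (e : Fin ℓ → Series (Fin (m + 1))) :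
    comp (one : Series (Fin (ℓ + 1))) e = one := by
  funext η
  rw [comp_eq_sum, Finset.sum_eq_single_of_mem 0 (by simp)]
  · rw [compP, sum_vec_zero]
    simp [psiWord_nil, one_nil]
  · intro k _ hk
    match k, hk with
    | k + 1, _ =>
      refine Finset.sum_eq_zero fun v _ => ?_
      have : v.toList ≠ [] := by
        intro h
        have := v.toList_length
        rw [h] at this; simp at this
      rw [show (one : Series (Fin (ℓ + 1))) v.toList = 0 by simp [one, this], zero_mul]

end CompRules

noncomputable section MainIdentities

set_option linter.unusedSectionVars false

variable {m ℓ : ℕ}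

lemma sh_left_comm {X : Type*} [DecidableEq X] (a b c : Series X) :
    sh a (sh b c) = sh b (sh a c) := by
  rw [← sh_assoc, sh_comm a b, sh_assoc]

lemma ld_sh {X : Type*} [DecidableEq X] (x : X) (a b : Series X) :
    ld x (sh a b) = sh (ld x a) b + sh a (ld x b) := by
  funext w; exact sh_cons a b x w

lemma ld_mix_zero (a : Series (Fin (m + 1))) (d : Fin m → Series (Fin (m + 1))) :
    ld 0 (mix a d) = mix (ld 0 a) d := by
  funext w; exact mix_zero_cons a d w

lemma ld_mix_succ (a : Series (Fin (m + 1))) (d : Fin m → Series (Fin (m + 1))) (j : Fin m) :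
    ld j.succ (mix a d) = sh (d j) (mix (ld j.succ a) d) := by
  funext w; exact mix_succ_cons a d j w

lemma ld_comp_zero (a : Series (Fin (ℓ + 1))) (e : Fin ℓ → Series (Fin (m + 1))) :
    ld 0 (comp a e) = ∑ i : Fin (ℓ + 1), sh (Fin.cases one e i) (comp (ld i a) e) := by
  funext w
  rw [Finset.sum_apply]
  exact comp_zero_cons a e w

lemma ld_comp_succ (a : Series (Fin (ℓ + 1))) (e : Fin ℓ → Series (Fin (m + 1))) (j : Fin m) :
    ld j.succ (comp a e) = 0 := by
  funext w; exact comp_succ_cons a e j w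

/-- Shuffle distributes over the mixed composition product from the left. -/
lemma mix_sh (d : Fin m → Series (Fin (m + 1))) (a b : Series (Fin (m + 1))) :
    mix (sh a b) d = sh (mix a d) (mix b d) := by
  have key : ∀ (n : ℕ) (a b : Series (Fin (m + 1))) (η : List (Fin (m + 1))), η.length ≤ n →
      mix (sh a b) d η = sh (mix a d) (mix b d) η := by
    intro n
    induction n with
    | zero =>
      intro a b η hη
      have : η = [] := List.length_eq_zero_iff.mp (Nat.le_zero.mp hη)
      subst this
      rw [mix_nil, sh_nil, sh_nil, mix_nil, mix_nil]
    | succ n ih =>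
      intro a b η hη
      match η with
      | [] => rw [mix_nil, sh_nil, sh_nil, mix_nil, mix_nil]
      | x :: t =>
        have ht : t.length ≤ n := by simpa using hη
        rcases Fin.eq_zero_or_eq_succ x with rfl | ⟨j, rfl⟩
        · rw [mix_zero_cons, ld_sh, mix_add_left, Pi.add_apply,
            ih (ld 0 a) b t ht, ih a (ld 0 b) t ht,
            sh_cons, ld_mix_zero, ld_mix_zero]
        · rw [mix_succ_cons, ld_sh, mix_add_left, sh_add_right, Pi.add_apply]
          have r1 : sh (d j) (mix (sh (ld j.succ a) b) d) t
              = sh (d j) (sh (mix (ld j.succ a) d) (mix b d)) t :=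
            sh_congr (n := t.length) (fun w _ => rfl)
              (fun w hw => ih _ _ w (le_trans hw ht)) t le_rfl
          have r2 : sh (d j) (mix (sh a (ld j.succ b)) d) t
              = sh (d j) (sh (mix a d) (mix (ld j.succ b) d)) t :=
            sh_congr (n := t.length) (fun w _ => rfl)
              (fun w hw => ih _ _ w (le_trans hw ht)) t le_rfl
          rw [r1, r2, sh_cons, ld_mix_succ, ld_mix_succ, sh_assoc,
            sh_left_comm (mix a d) (d j) (mix (ld j.succ b) d)]
  funext η
  exact key η.length a b η le_rfl

/-- Shuffle distributes over the composition product from the left. -/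
lemma comp_sh (e : Fin ℓ → Series (Fin (m + 1))) (a b : Series (Fin (ℓ + 1))) :
    comp (sh a b) e = sh (comp a e) (comp b e) := by
  have key : ∀ (n : ℕ) (a b : Series (Fin (ℓ + 1))) (η : List (Fin (m + 1))), η.length ≤ n →
      comp (sh a b) e η = sh (comp a e) (comp b e) η := by
    intro n
    induction n with
    | zero =>
      intro a b η hη
      have : η = [] := List.length_eq_zero_iff.mp (Nat.le_zero.mp hη)
      subst this
      rw [comp_nil, sh_nil, sh_nil, comp_nil, comp_nil]
    | succ n ih =>
      intro a b η hη
      match η with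
      | [] => rw [comp_nil, sh_nil, sh_nil, comp_nil, comp_nil]
      | x :: t =>
        have ht : t.length ≤ n := by simpa using hη
        rcases Fin.eq_zero_or_eq_succ x with rfl | ⟨j, rfl⟩
        · rw [comp_zero_cons, sh_cons, ld_comp_zero, ld_comp_zero,
            sh_sum_left, sh_sum_right, Finset.sum_apply, Finset.sum_apply,
            ← Finset.sum_add_distrib]
          refine Finset.sum_congr rfl fun i _ => ?_
          have hld : ld i (sh a b) = sh (ld i a) b + sh a (ld i b) := ld_sh i a b
          rw [hld, comp_add_left, sh_add_right, Pi.add_apply]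
          have r1 : sh (Fin.cases one e i) (comp (sh (ld i a) b) e) t
              = sh (Fin.cases one e i) (sh (comp (ld i a) e) (comp b e)) t :=
            sh_congr (n := t.length) (fun w _ => rfl)
              (fun w hw => ih _ _ w (le_trans hw ht)) t le_rfl
          have r2 : sh (Fin.cases one e i) (comp (sh a (ld i b)) e) t
              = sh (Fin.cases one e i) (sh (comp a e) (comp (ld i b) e)) t :=
            sh_congr (n := t.length) (fun w _ => rfl)
              (fun w hw => ih _ _ w (le_trans hw ht)) t le_rfl
          rw [r1, r2, sh_assoc, sh_left_comm (comp a e) (Fin.cases one e i) (comp (ld i b) e)]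
        · rw [comp_succ_cons, sh_cons, ld_comp_succ, ld_comp_succ, sh_zero_left, sh_zero_right]
          simp
  funext η
  exact key η.length a b η le_rfl

lemma mix_fin_cases (cf : Fin ℓ → Series (Fin (m + 1))) (f : Fin m → Series (Fin (m + 1)))
    (i : Fin (ℓ + 1)) :
    mix (Fin.cases one cf i) f = Fin.cases one (fun j => mix (cf j) f) i := by
  induction i using Fin.cases with
  | zero => simp [mix_one]
  | succ j => simp

/-- Mixed associativity: `a ∘ (c ∘̄ δ_f) = (a ∘ c) ∘̄ δ_f`. -/
lemma comp_mix (cf : Fin ℓ → Series (Fin (m + 1))) (f : Fin m → Series (Fin (m + 1)))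
    (a : Series (Fin (ℓ + 1))) :
    comp a (fun i => mix (cf i) f) = mix (comp a cf) f := by
  have key : ∀ (n : ℕ) (a : Series (Fin (ℓ + 1))) (η : List (Fin (m + 1))), η.length ≤ n →
      comp a (fun i => mix (cf i) f) η = mix (comp a cf) f η := by
    intro n
    induction n with
    | zero =>
      intro a η hη
      have : η = [] := List.length_eq_zero_iff.mp (Nat.le_zero.mp hη)
      subst this
      rw [comp_nil, mix_nil, comp_nil]
    | succ n ih =>
      intro a η hη
      match η with
      | [] => rw [comp_nil, mix_nil, comp_nil]
      | x :: t =>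
        have ht : t.length ≤ n := by simpa using hη
        rcases Fin.eq_zero_or_eq_succ x with rfl | ⟨j, rfl⟩
        · rw [comp_zero_cons, mix_zero_cons, ld_comp_zero, mix_sum_left, Finset.sum_apply]
          refine Finset.sum_congr rfl fun i _ => ?_
          rw [mix_sh, mix_fin_cases]
          exact (sh_congr (n := t.length) (fun w _ => rfl)
            (fun w hw => (ih _ w (le_trans hw ht)).symm) t le_rfl).symm
        · rw [comp_succ_cons, mix_succ_cons, ld_comp_succ, mix_zero_left, sh_zero_right]
          rfl
  funext η
  exact key η.length a η le_rfl

/-- Right action property: `(a ∘̄ δ_d) ∘̄ δ_e = a ∘̄ (δ_d ∘ δ_e)`. -/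
lemma mix_mix (d e : Fin m → Series (Fin (m + 1))) (a : Series (Fin (m + 1))) :
    mix (mix a d) e = mix a (star d e) := by
  have key : ∀ (n : ℕ) (a : Series (Fin (m + 1))) (η : List (Fin (m + 1))), η.length ≤ n →
      mix (mix a d) e η = mix a (star d e) η := by
    intro n
    induction n with
    | zero =>
      intro a η hη
      have : η = [] := List.length_eq_zero_iff.mp (Nat.le_zero.mp hη)
      subst this
      rw [mix_nil, mix_nil, mix_nil]
    | succ n ih =>
      intro a η hη
      match η with
      | [] => rw [mix_nil, mix_nil, mix_nil]
      | x :: t =>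
        have ht : t.length ≤ n := by simpa using hη
        rcases Fin.eq_zero_or_eq_succ x with rfl | ⟨j, rfl⟩
        · rw [mix_zero_cons, mix_zero_cons, ld_mix_zero]
          exact ih _ t ht
        · rw [mix_succ_cons, mix_succ_cons, ld_mix_succ, mix_sh]
          show sh (e j) (sh (mix (d j) e) (mix (mix (ld j.succ a) d) e)) t
            = sh (star d e j) (mix (ld j.succ a) (star d e)) t
          have r1 : sh (e j) (sh (mix (d j) e) (mix (mix (ld j.succ a) d) e)) t
              = sh (e j) (sh (mix (d j) e) (mix (ld j.succ a) (star d e))) t := by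
            refine sh_congr (n := t.length) (fun w _ => rfl) (fun w hw => ?_) t le_rfl
            exact sh_congr (n := w.length) (fun u _ => rfl)
              (fun u hu => ih _ u (le_trans (le_trans hu hw) ht)) w le_rfl
          rw [r1]
          show _ = sh (sh (e j) (mix (d j) e)) (mix (ld j.succ a) (star d e)) t
          rw [sh_assoc]
  funext η
  exact key η.length a η le_rfl

end MainIdentities

noncomputable section ShInv

set_option linter.unusedSectionVars false

variable {X : Type*} [DecidableEq X]

lemma sh_neg_left (a b : Series X) : sh (-a) b = -(sh a b) := by
  have := sh_smul_left (-1 : ℝ) a b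
  simpa [neg_one_smul] using this

lemma sh_sub_left (a b c : Series X) : sh (a - b) c = sh a c - sh b c := by
  rw [sub_eq_add_neg, sh_add_left, sh_neg_left, ← sub_eq_add_neg]

lemma sh_vanish : ∀ (η : List X) (p q : ℕ) (a b : Series X),
    (∀ w : List X, w.length < p → a w = 0) → (∀ w : List X, w.length < q → b w = 0) →
    η.length < p + q → sh a b η = 0 := by
  intro η
  induction η with
  | nil =>
    intro p q a b ha hb h
    rw [sh_nil]
    rcases Nat.pos_of_ne_zero (fun h0 => by omega : p + q ≠ 0) with _
    by_cases hp : 0 < p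
    · rw [ha [] (by simpa using hp), zero_mul]
    · have hq : 0 < q := by omega
      rw [hb [] (by simpa using hq), mul_zero]
  | cons x t ih =>
    intro p q a b ha hb h
    rw [sh_cons]
    have h1 : sh (ld x a) b t = 0 := by
      refine ih (p - 1) q (ld x a) b (fun w hw => ha (x :: w) (by simp; omega)) hb ?_
      simp at h ⊢; omega
    have h2 : sh a (ld x b) t = 0 := by
      refine ih p (q - 1) a (ld x b) ha (fun w hw => hb (x :: w) (by simp; omega)) ?_
      simp at h ⊢; omega
    rw [h1, h2, add_zero]

lemma shpow_small {a : Series X} (ha : a [] = 0) :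
    ∀ (k : ℕ) (η : List X), η.length < k → shpow a k η = 0 := by
  intro k
  induction k with
  | zero => intro η h; omega
  | succ k ih =>
    intro η h
    show sh a (shpow a k) η = 0
    refine sh_vanish η 1 k a (shpow a k) ?_ (fun w hw => ih w hw) (by omega)
    intro w hw
    have : w = [] := List.length_eq_zero_iff.mp (by omega)
    rwa [this]

lemma sprime_nil (s : Series X) : sprime s [] = 0 := by simp [sprime]

lemma shInv_nil (s : Series X) : shInv s [] = (s [])⁻¹ := by
  simp [shInv, shpow, one_nil]

lemma shInv_eval_of_lt (s : Series X) {η : List X} {N : ℕ} (h : η.length < N) :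
    shInv s η = (s [])⁻¹ * ∑ k ∈ Finset.range N, shpow (sprime s) k η := by
  rw [shInv]
  congr 1
  refine Finset.sum_subset (Finset.range_subset_range.mpr (by omega)) fun k _ hk => ?_
  exact shpow_small (sprime_nil s) k η (by simp at hk; omega)

lemma sh_shInv {s : Series X} (h : s [] ≠ 0) : sh s (shInv s) = one := by
  funext η
  set N := η.length with hN
  set a := sprime s with ha
  set T : Series X := ∑ k ∈ Finset.range (N + 1), shpow a k with hT
  have step1 : sh s (shInv s) η = sh s ((s [])⁻¹ • T) η := by
    refine sh_congr (n := N) (fun w _ => rfl) (fun w hw => ?_) η le_rfl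
    rw [shInv_eval_of_lt s (show w.length < N + 1 by omega), Pi.smul_apply, smul_eq_mul, hT,
      Finset.sum_apply]
  have hs : s = s [] • (one : Series X) - s [] • a := by
    funext w
    rw [Pi.sub_apply, Pi.smul_apply, Pi.smul_apply, smul_eq_mul, smul_eq_mul, ha, sprime]
    by_cases hw : w = []
    · subst hw; simp [one_nil]
    · rw [if_neg hw]
      have : (one : Series X) w = 0 := by simp [one, hw]
      rw [this]
      field_simp
      ring
  have hshaT : sh a T η = ∑ k ∈ Finset.range (N + 1), shpow a (k + 1) η := by
    rw [hT, sh_sum_right, Finset.sum_apply]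
    exact Finset.sum_congr rfl fun k _ => rfl
  have hsum : ∑ k ∈ Finset.range (N + 1), shpow a (k + 1) η
      = T η + shpow a (N + 1) η - one η := by
    have h1 := Finset.sum_range_succ' (fun k => shpow a k η) (N + 1)
    have h2 := Finset.sum_range_succ (fun k => shpow a k η) (N + 1)
    have hT' : T η = ∑ k ∈ Finset.range (N + 1), shpow a k η := by
      rw [hT, Finset.sum_apply]
    have h0 : shpow a 0 η = one η := rfl
    rw [h0] at h1
    rw [hT']
    linarith [h1, h2]
  have hzero : shpow a (N + 1) η = 0 := shpow_small (by rw [ha]; exact sprime_nil s) _ _ (by omega)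
  have step2 : sh s ((s [])⁻¹ • T) η = (s [])⁻¹ * sh s T η := by
    rw [sh_smul_right, Pi.smul_apply, smul_eq_mul]
  have step3 : sh s T η = s [] * T η - s [] * sh a T η := by
    nth_rewrite 1 [hs]
    rw [sh_sub_left, Pi.sub_apply, sh_smul_left, sh_smul_left, Pi.smul_apply, Pi.smul_apply,
      smul_eq_mul, smul_eq_mul, sh_one_left]
  rw [step1, step2, step3, hshaT, hsum, hzero]
  field_simp
  ring

lemma sh_inv_unique {s t t' : Series X} (ht : sh s t = one) (ht' : sh s t' = one) : t = t' := by
  calc t = sh t one := (sh_one_right t).symm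
    _ = sh t (sh s t') := by rw [ht']
    _ = sh (sh t s) t' := (sh_assoc t s t').symm
    _ = sh (sh s t) t' := by rw [sh_comm t s]
    _ = sh one t' := by rw [ht]
    _ = t' := sh_one_left t'

lemma sh_sh_comm4 (a b a' b' : Series X) :
    sh (sh a b) (sh a' b') = sh (sh a a') (sh b b') := by
  rw [sh_assoc a b, sh_left_comm b a' b', ← sh_assoc]

lemma shInv_sh {a b : Series X} (ha : a [] ≠ 0) (hb : b [] ≠ 0) :
    shInv (sh a b) = sh (shInv a) (shInv b) := by
  refine sh_inv_unique (sh_shInv (by rw [sh_nil]; exact mul_ne_zero ha hb)) ?_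
  rw [sh_sh_comm4, sh_shInv ha, sh_shInv hb, sh_one_left]

lemma shInv_one : shInv (one : Series X) = one := by
  funext η
  have hsp : sprime (one : Series X) = 0 := by
    funext w
    by_cases hw : w = [] <;> simp [sprime, one, hw]
  rw [shInv, hsp, one_nil, inv_one, one_mul,
    Finset.sum_eq_single_of_mem 0 (by simp)]
  · rfl
  · intro k _ hk
    match k, hk with
    | k + 1, _ => show sh 0 (shpow 0 k) η = 0; rw [sh_zero_left]; rfl

end ShInv

noncomputable section ShInvMix

set_option linter.unusedSectionVars false

variable {m : ℕ}

lemma shInv_mix {s : Series (Fin (m + 1))} (e : Fin m → Series (Fin (m + 1)))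
    (hs : s [] ≠ 0) : shInv (mix s e) = mix (shInv s) e := by
  refine sh_inv_unique (sh_shInv (by rw [mix_nil]; exact hs)) ?_
  rw [← mix_sh, sh_shInv hs, mix_one]

end ShInvMix

noncomputable section DynInvTheory

set_option linter.unusedSectionVars false

variable {m : ℕ}

/-- Iteration approximating the fixed point defining `dynInv`. -/
def dynSeq (g : Fin m → Series (Fin (m + 1))) : ℕ → (Fin m → Series (Fin (m + 1)))
  | 0 => oneV m
  | n + 1 => fun i => mix (shInv (g i)) (dynSeq g n)

lemma dynSeq_step (g : Fin m → Series (Fin (m + 1))) :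
    ∀ (n : ℕ) (i : Fin m) (η : List (Fin (m + 1))), η.length ≤ n →
      dynSeq g (n + 1) i η = dynSeq g (n + 2) i η := by
  intro n
  induction n with
  | zero =>
    intro i η hη
    exact mix_congr (n := 0) (fun j w hw => absurd hw (by omega)) _ η hη
  | succ n ih =>
    intro i η hη
    exact mix_congr (n := n + 1) (fun j w hw => ih j w (by omega)) _ η hη

lemma dynSeq_agree (g : Fin m → Series (Fin (m + 1))) :
    ∀ (n N : ℕ), n ≤ N → ∀ (i : Fin m) (η : List (Fin (m + 1))), η.length ≤ n →
      dynSeq g (n + 1) i η = dynSeq g (N + 1) i η := by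
  intro n N hnN
  induction N, hnN using Nat.le_induction with
  | base => intro i η h; rfl
  | succ N hN ih =>
    intro i η h
    rw [ih i η h]
    exact dynSeq_step g N i η (le_trans h hN)

/-- The fixed point. -/
def dynLim (g : Fin m → Series (Fin (m + 1))) : Fin m → Series (Fin (m + 1)) :=
  fun i η => dynSeq g (η.length + 1) i η

lemma dynLim_fix (g : Fin m → Series (Fin (m + 1))) :
    dynLim g = fun i => mix (shInv (g i)) (dynLim g) := by
  funext i η
  have h1 : dynLim g i η = dynSeq g (η.length + 2) i η := dynSeq_step g _ i η le_rfl
  have h2 : dynSeq g (η.length + 2) i η = mix (shInv (g i)) (dynSeq g (η.length + 1)) η := rfl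
  have h3 : mix (shInv (g i)) (dynSeq g (η.length + 1)) η
      = mix (shInv (g i)) (dynLim g) η := by
    refine mix_congr (n := η.length) (fun j w hw => ?_) _ η le_rfl
    exact (dynSeq_agree g w.length η.length (by omega) j w le_rfl).symm
  rw [h1, h2, h3]

lemma fix_unique {g e f : Fin m → Series (Fin (m + 1))}
    (he : e = fun i => mix (shInv (g i)) e) (hf : f = fun i => mix (shInv (g i)) f) :
    e = f := by
  have key : ∀ (n : ℕ) (i : Fin m) (η : List (Fin (m + 1))), η.length ≤ n →
      e i η = f i η := by
    intro n
    induction n with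
    | zero =>
      intro i η hη
      conv_lhs => rw [he]
      conv_rhs => rw [hf]
      exact mix_congr (n := 0) (fun j w hw => absurd hw (by omega)) _ η hη
    | succ n ih =>
      intro i η hη
      conv_lhs => rw [he]
      conv_rhs => rw [hf]
      exact mix_congr (n := n + 1) (fun j w hw => ih j w (by omega)) _ η hη
  funext i η
  exact key η.length i η le_rfl

lemma dynInv_spec (g : Fin m → Series (Fin (m + 1))) :
    dynInv g = fun i => mix (shInv (g i)) (dynInv g) := by
  have h : ∃ e : Fin m → Series (Fin (m + 1)), e = fun i => mix (shInv (g i)) e :=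
    ⟨dynLim g, dynLim_fix g⟩
  rw [dynInv, dif_pos h]
  exact h.choose_spec

lemma dynInv_unique {g f : Fin m → Series (Fin (m + 1))}
    (hf : f = fun i => mix (shInv (g i)) f) : dynInv g = f :=
  fix_unique (dynInv_spec g) hf

end DynInvTheory

noncomputable section FinalAux

set_option linter.unusedSectionVars false

variable {m : ℕ}

lemma mix_oneV (a : Series (Fin (m + 1))) : mix a (oneV m) = a := by
  funext η
  induction η generalizing a with
  | nil => rw [mix_nil]
  | cons x t ih =>
    rcases Fin.eq_zero_or_eq_succ x with rfl | ⟨j, rfl⟩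
    · rw [mix_zero_cons]
      exact ih (ld 0 a)
    · rw [mix_succ_cons, show (oneV m : Fin m → Series (Fin (m + 1))) j = one from rfl,
        sh_one_left]
      exact ih (ld j.succ a)

end FinalAux













/-- The multiplicative dynamic feedback product is a right group action of
the shuffle group `(ℝ^m_{pi}⟨⟨X'⟩⟩, ⧢, 1)` on `ℝ^q⟨⟨X⟩⟩`:
`c @̌ 1 = c` and `(c @̌ d₁) @̌ d₂ = c @̌ (d₁ ⧢ d₂)`. -/
theorem mult_dyn_feedback_group_action (m q : ℕ)
    (c : Fin q → Series (Fin (m + 1)))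
    (d₁ d₂ : Fin m → Series (Fin (q + 1)))
    (h₁ : ∀ j, d₁ j [] ≠ 0) (h₂ : ∀ j, d₂ j [] ≠ 0) :
    feedback c (oneV m : Fin m → Series (Fin (q + 1))) = c ∧
    feedback (feedback c d₁) d₂ = feedback c (fun j => sh (d₁ j) (d₂ j)) := by
  constructor
  · -- identity acts trivially
    funext i
    show mix (c i) (dynInv fun j => comp (shInv ((oneV m : Fin m → Series (Fin (q + 1))) j)) c)
      = c i
    have hD : dynInv (fun j => comp (shInv ((oneV m : Fin m → Series (Fin (q + 1))) j)) c)
        = oneV m := by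
      refine dynInv_unique ?_
      funext i'
      show (one : Series (Fin (m + 1)))
        = mix (shInv (comp (shInv ((oneV m : Fin m → Series (Fin (q + 1))) i')) c)) (oneV m)
      rw [show (oneV m : Fin m → Series (Fin (q + 1))) i' = one from rfl, shInv_one, comp_one,
        shInv_one, mix_one]
    rw [hD, mix_oneV]
  · -- compatibility with the shuffle product
    have e₁spec := dynInv_spec (fun j => comp (shInv (d₁ j)) c)
    set g₁ : Fin m → Series (Fin (m + 1)) := fun j => comp (shInv (d₁ j)) c with hg₁def
    set e₁ : Fin m → Series (Fin (m + 1)) := dynInv g₁ with he₁def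
    set h : Fin m → Series (Fin (m + 1)) := fun j => comp (shInv (d₂ j)) c with hhdef
    have hg₁0 : ∀ j, g₁ j [] ≠ 0 := by
      intro j
      rw [hg₁def]
      show comp (shInv (d₁ j)) c [] ≠ 0
      rw [comp_nil, shInv_nil]
      exact inv_ne_zero (h₁ j)
    have hh0 : ∀ j, h j [] ≠ 0 := by
      intro j
      rw [hhdef]
      show comp (shInv (d₂ j)) c [] ≠ 0
      rw [comp_nil, shInv_nil]
      exact inv_ne_zero (h₂ j)
    have hfb1 : feedback c d₁ = fun i => mix (c i) e₁ := rfl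
    set g₂ : Fin m → Series (Fin (m + 1)) :=
      fun j => comp (shInv (d₂ j)) (feedback c d₁) with hg₂def
    have e₂spec := dynInv_spec g₂
    set e₂ : Fin m → Series (Fin (m + 1)) := dynInv g₂ with he₂def
    have hg₂ : ∀ j, g₂ j = mix (h j) e₁ := by
      intro j
      rw [hg₂def]
      show comp (shInv (d₂ j)) (feedback c d₁) = mix (h j) e₁
      rw [hfb1, hhdef]
      exact comp_mix c e₁ (shInv (d₂ j))
    set G : Fin m → Series (Fin (m + 1)) :=
      fun j => comp (shInv (sh (d₁ j) (d₂ j))) c with hGdef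
    have hG : ∀ j, G j = sh (g₁ j) (h j) := by
      intro j
      rw [hGdef]
      show comp (shInv (sh (d₁ j) (d₂ j))) c = sh (g₁ j) (h j)
      rw [shInv_sh (h₁ j) (h₂ j), comp_sh, hg₁def, hhdef]
    have hF : star e₁ e₂ = fun i => mix (shInv (G i)) (star e₁ e₂) := by
      funext i
      show sh (e₂ i) (mix (e₁ i) e₂) = mix (shInv (G i)) (star e₁ e₂)
      rw [hG i, shInv_sh (hg₁0 i) (hh0 i), mix_sh]
      have hA : mix (shInv (g₁ i)) (star e₁ e₂) = mix (e₁ i) e₂ := by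
        have h1 : mix (shInv (g₁ i)) e₁ = e₁ i := (congrFun e₁spec i).symm
        rw [← mix_mix, h1]
      have hB : mix (shInv (h i)) (star e₁ e₂) = e₂ i := by
        rw [← mix_mix, ← shInv_mix e₁ (hh0 i), ← hg₂ i]
        exact (congrFun e₂spec i).symm
      rw [hA, hB, sh_comm]
    have hDG : dynInv G = star e₁ e₂ := dynInv_unique hF
    funext i
    show mix (mix (c i) e₁) e₂ = mix (c i) (dynInv G)
    rw [hDG, mix_mix]

end FPS
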